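/- Let a be a real number and n ≥ 1 an integer. Define ψ_n : (0, π/(2ω)) × ℝ^d → ℂ by ψ_n(t,x) = (cos ωt)^{−d/2} · exp{ (i·m·ω/(2ħ·sin ωt·cos ωt)) · [ −‖x‖²·sin²ωt + 2 x·I(t,0)·cos ωt − 2 J(t,0)·cos ωt + 2 x·I(0,t) − ‖I(0,t)‖² ] } · Σ_{k=0}^{n} C_k(n,a) · exp[ i·(1 − 2k/n)·p·(x − I(0,t))/(ħ·cos ωt) − i·(1 − 2k/n)²·‖p‖²·tan ωt/(2ħmω) ]. Then ψ_n satisfies the driven harmonic oscillator Schrödinger equation iħ·∂ψ_n/∂t + (ħ²/(2m))·Δ_x ψ_n − (1/2)·m·ω²·‖x‖²·ψ_n + (f(t)·x)·ψ_n = 0 at every point of (0, π/(2ω)) × ℝ^d, and for every x ∈ ℝ^d one has lim_{t→0⁺} ψ_n(t,x) = Σ_{k=0}^{n} C_k(n,a)·exp(i·(p·x)·(1 − 2k/n)/ħ). -/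

import Mathlib

open scoped RealInnerProductSpace

/-- Directional derivative of a complex-valued function on `ℝ^d` along `v`. -/
noncomputable def dirDeriv {d : ℕ} (v : EuclideanSpace ℝ (Fin d))
    (g : EuclideanSpace ℝ (Fin d) → ℂ) (x : EuclideanSpace ℝ (Fin d)) : ℂ :=
  deriv (fun r : ℝ => g (x + r • v)) 0

/-- The Laplacian `Δg = ∑_{j=1}^d ∂²g/∂x_j²` of a complex-valued function on `ℝ^d`. -/
noncomputable def laplacian {d : ℕ} (g : EuclideanSpace ℝ (Fin d) → ℂ) :
    EuclideanSpace ℝ (Fin d) → ℂ :=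
  fun x => ∑ j : Fin d,
    dirDeriv (EuclideanSpace.single j (1 : ℝ))
      (dirDeriv (EuclideanSpace.single j (1 : ℝ)) g) x

/-- `I(u,v) = (1/(mω))·∫_v^u f(s)·sin(ω(s−v)) ds ∈ ℝ^d`. -/
noncomputable def Ivec {d : ℕ} (m ω : ℝ) (f : ℝ → EuclideanSpace ℝ (Fin d)) (u v : ℝ) :
    EuclideanSpace ℝ (Fin d) :=
  (1 / (m * ω)) • ∫ s in v..u, Real.sin (ω * (s - v)) • f s

/-- `J(u,v) = (1/(m²ω²))·∫_v^u ∫_v^s (f(s)·f(s'))·sin(ω(u−s))·sin(ω(s'−v)) ds' ds ∈ ℝ`. -/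
noncomputable def Jval {d : ℕ} (m ω : ℝ) (f : ℝ → EuclideanSpace ℝ (Fin d)) (u v : ℝ) : ℝ :=
  (1 / (m ^ 2 * ω ^ 2)) * ∫ s in v..u, ∫ s' in v..s,
    (⟪f s, f s'⟫ : ℝ) * Real.sin (ω * (u - s)) * Real.sin (ω * (s' - v))

namespace DOS
variable {d : ℕ}

noncomputable def Pv (ω : ℝ) (f : ℝ → EuclideanSpace ℝ (Fin d)) (t : ℝ) :
    EuclideanSpace ℝ (Fin d) := ∫ u in (0:ℝ)..t, Real.sin (ω*u) • f u

noncomputable def Qv (ω : ℝ) (f : ℝ → EuclideanSpace ℝ (Fin d)) (t : ℝ) :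
    EuclideanSpace ℝ (Fin d) := ∫ u in (0:ℝ)..t, Real.cos (ω*u) • f u

noncomputable def Kc (ω : ℝ) (f : ℝ → EuclideanSpace ℝ (Fin d)) (t : ℝ) : ℝ :=
  ∫ u in (0:ℝ)..t, Real.cos (ω*u) * ⟪f u, Pv ω f u⟫

lemma hasDerivAt_primitive {F : Type*} [NormedAddCommGroup F] [NormedSpace ℝ F]
    [CompleteSpace F] {g : ℝ → F} (hg : Continuous g) (t : ℝ) :
    HasDerivAt (fun u => ∫ s in (0:ℝ)..u, g s) (g t) t :=
  intervalIntegral.integral_hasDerivAt_right (hg.intervalIntegrable _ _)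
    (hg.stronglyMeasurableAtFilter _ _) hg.continuousAt

variable {ω m hbar : ℝ} {f : ℝ → EuclideanSpace ℝ (Fin d)} {p : EuclideanSpace ℝ (Fin d)} {b : ℝ}

lemma hP (hf : Continuous f) (t : ℝ) : HasDerivAt (Pv ω f) (Real.sin (ω*t) • f t) t :=
  hasDerivAt_primitive (by fun_prop) t

lemma hQ (hf : Continuous f) (t : ℝ) : HasDerivAt (Qv ω f) (Real.cos (ω*t) • f t) t :=
  hasDerivAt_primitive (by fun_prop) t

lemma contP (hf : Continuous f) : Continuous (Pv ω f) := by
  have : Differentiable ℝ (Pv ω f) := fun t => (hP hf t).differentiableAt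
  exact this.continuous

lemma contQ (hf : Continuous f) : Continuous (Qv ω f) := by
  have : Differentiable ℝ (Qv ω f) := fun t => (hQ hf t).differentiableAt
  exact this.continuous

lemma hKc (hf : Continuous f) (t : ℝ) :
    HasDerivAt (Kc ω f) (Real.cos (ω*t) * ⟪f t, Pv ω f t⟫) t :=
  hasDerivAt_primitive (((Real.continuous_cos.comp (continuous_const.mul continuous_id)).mul
    (hf.inner (contP hf)))) t

lemma contKc (hf : Continuous f) : Continuous (Kc ω f) := by
  have : Differentiable ℝ (Kc ω f) := fun t => (hKc hf t).differentiableAt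
  exact this.continuous

lemma Ks_eq (hf : Continuous f) (t : ℝ) :
    (∫ u in (0:ℝ)..t, Real.sin (ω*u) * ⟪f u, Pv ω f u⟫) = ‖Pv ω f t‖^2 / 2 := by
  have key : ∀ s : ℝ, ((∫ u in (0:ℝ)..s, Real.sin (ω*u) * ⟪f u, Pv ω f u⟫) - ‖Pv ω f s‖^2/2)
      = ((∫ u in (0:ℝ)..(0:ℝ), Real.sin (ω*u) * ⟪f u, Pv ω f u⟫) - ‖Pv ω f 0‖^2/2) := by
    intro s
    set g : ℝ → ℝ := fun s => (∫ u in (0:ℝ)..s, Real.sin (ω*u) * ⟪f u, Pv ω f u⟫) - ‖Pv ω f s‖^2/2 with hg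
    have hder : ∀ s : ℝ, HasDerivAt g 0 s := by
      intro s
      have h1 : HasDerivAt (fun s => ∫ u in (0:ℝ)..s, Real.sin (ω*u) * ⟪f u, Pv ω f u⟫)
          (Real.sin (ω*s) * ⟪f s, Pv ω f s⟫) s :=
        hasDerivAt_primitive ((Real.continuous_sin.comp (continuous_const.mul continuous_id)).mul
          (hf.inner (contP hf))) s
      have h2 : HasDerivAt (fun s => (‖Pv ω f s‖^2 : ℝ)/2) (Real.sin (ω*s) * ⟪f s, Pv ω f s⟫) s := by
        have h3 := (HasDerivAt.inner ℝ (hP (ω := ω) hf s) (hP (ω := ω) hf s))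
        have h4 : HasDerivAt (fun s => (⟪Pv ω f s, Pv ω f s⟫ : ℝ))
            (2 * (Real.sin (ω*s) * ⟪f s, Pv ω f s⟫)) s := by
          refine h3.congr_deriv ?_
          rw [real_inner_smul_right, real_inner_smul_left, real_inner_comm]
          ring
        have h5 := h4.div_const 2
        simp only [mul_div_assoc, mul_div_cancel_left₀ _ (two_ne_zero (α := ℝ))] at h5
        simp only [real_inner_self_eq_norm_sq] at h5
        exact h5
      exact (h1.sub h2).congr_deriv (sub_self _)
    have hdiff : Differentiable ℝ g := fun s => (hder s).differentiableAt
    exact is_const_of_deriv_eq_zero hdiff (fun s => (hder s).deriv) s 0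
  have := key t
  simp only [intervalIntegral.integral_same, Pv, norm_zero] at this
  simp [Pv] at this ⊢
  linarith [this]

lemma Ivec_t0 (t : ℝ) : Ivec m ω f t 0 = (1/(m*ω)) • Pv ω f t := by
  simp [Ivec, Pv]

lemma Ivec_0t (hf : Continuous f) (t : ℝ) :
    Ivec m ω f 0 t = (1/(m*ω)) • (Real.sin (ω*t) • Qv ω f t - Real.cos (ω*t) • Pv ω f t) := by
  have h1 : ∀ s : ℝ, Real.sin (ω*(s-t)) • f s
      = Real.cos (ω*t) • (Real.sin (ω*s) • f s) - Real.sin (ω*t) • (Real.cos (ω*s) • f s) := by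
    intro s
    rw [smul_smul, smul_smul, ← sub_smul, mul_sub, Real.sin_sub]
    ring_nf
  rw [Ivec, intervalIntegral.integral_symm]
  simp only [h1]
  have i1 : IntervalIntegrable (fun s : ℝ => Real.cos (ω*t) • (Real.sin (ω*s) • f s))
      MeasureTheory.volume 0 t := by
    apply Continuous.intervalIntegrable
    fun_prop
  have i2 : IntervalIntegrable (fun s : ℝ => Real.sin (ω*t) • (Real.cos (ω*s) • f s))
      MeasureTheory.volume 0 t := by
    apply Continuous.intervalIntegrable
    fun_prop
  rw [intervalIntegral.integral_sub i1 i2,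
    intervalIntegral.integral_smul, intervalIntegral.integral_smul]
  rw [← Pv, ← Qv, neg_sub]

lemma Jval_t0 (hf : Continuous f) (t : ℝ) :
    Jval m ω f t 0
      = (1/(m^2*ω^2)) * (Real.sin (ω*t) * Kc ω f t - Real.cos (ω*t) * (‖Pv ω f t‖^2/2)) := by
  have hPint : ∀ s : ℝ,
      (∫ s' in (0:ℝ)..s, (⟪f s, f s'⟫ : ℝ) * Real.sin (ω*(t-s)) * Real.sin (ω*(s'-0)))
        = Real.sin (ω*(t-s)) * (⟪f s, Pv ω f s⟫ : ℝ) := by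
    intro s
    have e1 : ∀ s' : ℝ, (⟪f s, f s'⟫ : ℝ) * Real.sin (ω*(t-s)) * Real.sin (ω*(s'-0))
        = Real.sin (ω*(t-s)) * (⟪f s, Real.sin (ω*s') • f s'⟫ : ℝ) := by
      intro s'
      rw [real_inner_smul_right, sub_zero]; ring
    simp only [e1]
    rw [intervalIntegral.integral_const_mul]
    congr 1
    have i3 : IntervalIntegrable (fun s' : ℝ => Real.sin (ω*s') • f s')
        MeasureTheory.volume 0 s := by
      apply Continuous.intervalIntegrable
      exact (Real.continuous_sin.comp (continuous_const.mul continuous_id)).smul hf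
    have := (innerSL ℝ (f s)).intervalIntegral_comp_comm i3
    simpa only [innerSL_apply_apply, Pv] using this
  have e2 : ∀ s : ℝ, Real.sin (ω*(t-s)) * (⟪f s, Pv ω f s⟫ : ℝ)
      = Real.sin (ω*t) * (Real.cos (ω*s) * ⟪f s, Pv ω f s⟫)
        - Real.cos (ω*t) * (Real.sin (ω*s) * ⟪f s, Pv ω f s⟫) := by
    intro s
    rw [mul_sub, Real.sin_sub]; ring
  have cint : Continuous fun s => Real.cos (ω*s) * (⟪f s, Pv ω f s⟫ : ℝ) :=
    (Real.continuous_cos.comp (continuous_const.mul continuous_id)).mul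
      (hf.inner (contP hf))
  have sint : Continuous fun s => Real.sin (ω*s) * (⟪f s, Pv ω f s⟫ : ℝ) :=
    (Real.continuous_sin.comp (continuous_const.mul continuous_id)).mul
      (hf.inner (contP hf))
  rw [Jval]
  simp only [hPint, e2]
  rw [intervalIntegral.integral_sub
      (f := fun s => Real.sin (ω*t) * (Real.cos (ω*s) * ⟪f s, Pv ω f s⟫))
      (g := fun s => Real.cos (ω*t) * (Real.sin (ω*s) * ⟪f s, Pv ω f s⟫))
      ((continuous_const.mul cint).intervalIntegrable 0 t)
      ((continuous_const.mul sint).intervalIntegrable 0 t),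
    intervalIntegral.integral_const_mul, intervalIntegral.integral_const_mul,
    Ks_eq hf, ← Kc]

noncomputable def alph (m ω hbar t : ℝ) : ℝ := -(m*ω)/(2*hbar) * Real.tan (ω*t)

noncomputable def bet (ω hbar b : ℝ) (f : ℝ → EuclideanSpace ℝ (Fin d))
    (p : EuclideanSpace ℝ (Fin d)) (t : ℝ) : EuclideanSpace ℝ (Fin d) :=
  (hbar * Real.cos (ω*t))⁻¹ • (Qv ω f t + b • p)

noncomputable def gam (m ω hbar b : ℝ) (f : ℝ → EuclideanSpace ℝ (Fin d))
    (p : EuclideanSpace ℝ (Fin d)) (t : ℝ) : ℝ :=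
  (hbar*m*ω)⁻¹ * (-(Kc ω f t) + ⟪Pv ω f t, Qv ω f t⟫
    - Real.tan (ω*t) * ‖Qv ω f t‖^2/2
    + b * ⟪p, Pv ω f t⟫ - b * Real.tan (ω*t) * ⟪p, Qv ω f t⟫
    - b^2 * ‖p‖^2 * Real.tan (ω*t) / 2)

noncomputable def Sf (m ω hbar b : ℝ) (f : ℝ → EuclideanSpace ℝ (Fin d))
    (p : EuclideanSpace ℝ (Fin d)) (t : ℝ) (x : EuclideanSpace ℝ (Fin d)) : ℝ :=
  alph m ω hbar t * ‖x‖^2 + ⟪bet ω hbar b f p t, x⟫ + gam m ω hbar b f p t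

lemma phase_eq (hm : m ≠ 0) (hω : ω ≠ 0) (hh : hbar ≠ 0) {t : ℝ}
    (hs : Real.sin (ω*t) ≠ 0) (hc : Real.cos (ω*t) ≠ 0) (hf : Continuous f) (b : ℝ)
    (x : EuclideanSpace ℝ (Fin d)) :
    (m * ω / (2 * hbar * Real.sin (ω * t) * Real.cos (ω * t))) *
      (-‖x‖ ^ 2 * Real.sin (ω * t) ^ 2
        + 2 * ⟪x, Ivec m ω f t 0⟫ * Real.cos (ω * t)
        - 2 * Jval m ω f t 0 * Real.cos (ω * t)
        + 2 * ⟪x, Ivec m ω f 0 t⟫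
        - ‖Ivec m ω f 0 t‖ ^ 2)
    + (b * ⟪p, x - Ivec m ω f 0 t⟫ / (hbar * Real.cos (ω * t))
        - b ^ 2 * ‖p‖ ^ 2 * Real.tan (ω * t) / (2 * hbar * m * ω))
    = Sf m ω hbar b f p t x := by
  rw [Ivec_t0, Ivec_0t hf, Jval_t0 hf, Sf, alph, bet, gam]
  simp only [Real.tan_eq_sin_div_cos]
  simp only [inner_sub_right, inner_add_left, inner_sub_left, real_inner_smul_right,
    real_inner_smul_left, norm_smul, Real.norm_eq_abs, norm_sub_sq_real, mul_pow, sq_abs, abs_mul, abs_div,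
    abs_one, div_pow, one_pow]
  rw [real_inner_comm (Qv ω f t) x, real_inner_comm (Qv ω f t) (Pv ω f t)]
  field_simp
  ring_nf

lemma hωsin {t : ℝ} : HasDerivAt (fun t : ℝ => Real.sin (ω*t)) (ω * Real.cos (ω*t)) t := by
  exact ((Real.hasDerivAt_sin (ω*t)).comp t ((hasDerivAt_id t).const_mul ω)).congr_deriv (by ring)

lemma hωcos {t : ℝ} : HasDerivAt (fun t : ℝ => Real.cos (ω*t)) (-(ω * Real.sin (ω*t))) t := by
  have := (Real.hasDerivAt_cos (ω*t)).comp t ((hasDerivAt_id t).const_mul ω)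
  exact this.congr_deriv (by ring)

lemma hωtan {t : ℝ} (hc : Real.cos (ω*t) ≠ 0) :
    HasDerivAt (fun t : ℝ => Real.tan (ω*t)) (ω / Real.cos (ω*t)^2) t := by
  have := (Real.hasDerivAt_tan hc).comp t ((hasDerivAt_id t).const_mul ω)
  exact this.congr_deriv (by ring)

lemma halph {t : ℝ} (hc : Real.cos (ω*t) ≠ 0) :
    HasDerivAt (alph m ω hbar) (-(m*ω)/(2*hbar) * (ω / Real.cos (ω*t)^2)) t := by
  exact (hωtan hc).const_mul _

lemma hbetx (hf : Continuous f) {t : ℝ} (hc : Real.cos (ω*t) ≠ 0) (hh : hbar ≠ 0)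
    (x : EuclideanSpace ℝ (Fin d)) :
    HasDerivAt (fun t => (⟪bet ω hbar b f p t, x⟫ : ℝ))
      ((⟪f t, x⟫ : ℝ)/hbar
        + (ω * Real.sin (ω*t)/Real.cos (ω*t)) * ⟪bet ω hbar b f p t, x⟫) t := by
  have hfun : (fun t => (⟪bet ω hbar b f p t, x⟫ : ℝ))
      = fun t => ((⟪Qv ω f t, x⟫ : ℝ) + b * ⟪p, x⟫) / (hbar * Real.cos (ω*t)) := by
    funext t
    rw [bet, real_inner_smul_left, inner_add_left, real_inner_smul_left, div_eq_inv_mul]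
  rw [hfun]
  have hnum : HasDerivAt (fun t => ((⟪Qv ω f t, x⟫ : ℝ) + b * ⟪p, x⟫))
      (Real.cos (ω*t) * ⟪f t, x⟫) t := by
    have := (HasDerivAt.inner ℝ (hQ (ω := ω) hf t) (hasDerivAt_const t x)).add_const (b * ⟪p, x⟫)
    simpa only [inner_zero_right, zero_add, real_inner_smul_left] using this
  have hden : HasDerivAt (fun t => hbar * Real.cos (ω*t)) (hbar * -(ω * Real.sin (ω*t))) t :=
    hωcos.const_mul hbar
  have := hnum.div hden (by simp [hh, hc])
  refine this.congr_deriv ?_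
  rw [bet, real_inner_smul_left, inner_add_left, real_inner_smul_left]
  field_simp
  ring

lemma hgam (hm0 : m ≠ 0) (hω0 : ω ≠ 0) (hh : hbar ≠ 0) (hf : Continuous f) {t : ℝ}
    (hc : Real.cos (ω*t) ≠ 0) :
    HasDerivAt (gam m ω hbar b f p) (-(hbar/(2*m)) * ‖bet ω hbar b f p t‖^2) t := by
  have hQQ : HasDerivAt (fun t => (⟪Qv ω f t, Qv ω f t⟫ : ℝ))
      (2 * (Real.cos (ω*t) * ⟪f t, Qv ω f t⟫)) t := by
    have := HasDerivAt.inner ℝ (hQ (ω := ω) hf t) (hQ (ω := ω) hf t)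
    refine this.congr_deriv ?_
    rw [real_inner_smul_right, real_inner_smul_left, real_inner_comm]
    ring
  have hPQ : HasDerivAt (fun t => (⟪Pv ω f t, Qv ω f t⟫ : ℝ))
      (Real.cos (ω*t) * ⟪Pv ω f t, f t⟫ + Real.sin (ω*t) * ⟪f t, Qv ω f t⟫) t := by
    have := HasDerivAt.inner ℝ (hP (ω := ω) hf t) (hQ (ω := ω) hf t)
    refine this.congr_deriv ?_
    rw [real_inner_smul_right, real_inner_smul_left]
  have hpP : HasDerivAt (fun t => (⟪p, Pv ω f t⟫ : ℝ)) (Real.sin (ω*t) * ⟪p, f t⟫) t := by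
    have := HasDerivAt.inner ℝ (hasDerivAt_const t p) (hP (ω := ω) hf t)
    simpa only [inner_zero_left, add_zero, real_inner_smul_right] using this
  have hpQ : HasDerivAt (fun t => (⟪p, Qv ω f t⟫ : ℝ)) (Real.cos (ω*t) * ⟪p, f t⟫) t := by
    have := HasDerivAt.inner ℝ (hasDerivAt_const t p) (hQ (ω := ω) hf t)
    simpa only [inner_zero_left, add_zero, real_inner_smul_right] using this
  have hgfun : gam m ω hbar b f p = fun t => (hbar*m*ω)⁻¹ * (-(Kc ω f t) + ⟪Pv ω f t, Qv ω f t⟫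
      - Real.tan (ω*t) * ⟪Qv ω f t, Qv ω f t⟫/2
      + b * ⟪p, Pv ω f t⟫ - b * Real.tan (ω*t) * ⟪p, Qv ω f t⟫
      - b^2 * ‖p‖^2 * Real.tan (ω*t) / 2) := by
    funext t
    rw [gam, real_inner_self_eq_norm_sq]
  rw [hgfun]
  have hbig := (((((hKc (ω := ω) hf t).neg.add hPQ).sub
      (((hωtan hc).mul hQQ).div_const 2)).add (hpP.const_mul b)).sub
      (((hωtan hc).const_mul b).mul hpQ)).sub
      (((hωtan hc).const_mul (b^2*‖p‖^2)).div_const 2)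
  have := hbig.const_mul (hbar*m*ω)⁻¹
  refine this.congr_deriv ?_
  simp only [bet, norm_smul, Real.norm_eq_abs, mul_pow, sq_abs, norm_add_sq_real,
    real_inner_smul_right, Real.tan_eq_sin_div_cos, real_inner_self_eq_norm_sq]
  rw [real_inner_comm (Pv ω f t) (f t), real_inner_comm (Qv ω f t) p]
  field_simp
  ring

noncomputable def modeF (m ω hbar b : ℝ) (f : ℝ → EuclideanSpace ℝ (Fin d))
    (p : EuclideanSpace ℝ (Fin d)) (t : ℝ) (x : EuclideanSpace ℝ (Fin d)) : ℂ :=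
  Complex.exp (Complex.I * ((Sf m ω hbar b f p t x : ℝ) : ℂ))

lemma Sf_shift (t : ℝ) (x : EuclideanSpace ℝ (Fin d)) (j : Fin d) (r : ℝ) :
    Sf m ω hbar b f p t (x + r • EuclideanSpace.single j (1:ℝ))
      = Sf m ω hbar b f p t x
        + r * (2 * alph m ω hbar t * x j + bet ω hbar b f p t j)
        + alph m ω hbar t * r^2 := by
  rw [Sf, Sf]
  simp only [norm_add_sq_real, inner_add_right, real_inner_smul_right,
    EuclideanSpace.inner_single_right, conj_trivial, norm_smul,
    EuclideanSpace.norm_single, Real.norm_eq_abs, mul_pow, sq_abs, abs_one, one_pow, mul_one]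
  ring

lemma sum_sq (a : ℝ) (v x : EuclideanSpace ℝ (Fin d)) :
    ∑ j : Fin d, (2*a*x j + v j)^2 = 4*a^2*‖x‖^2 + 4*a*⟪v,x⟫ + ‖v‖^2 := by
  have hx : ‖x‖^2 = ∑ j, x j * x j := by
    rw [← real_inner_self_eq_norm_sq]
    simp only [PiLp.inner_apply, RCLike.inner_apply', conj_trivial]
  have hv : ‖v‖^2 = ∑ j, v j * v j := by
    rw [← real_inner_self_eq_norm_sq]
    simp only [PiLp.inner_apply, RCLike.inner_apply', conj_trivial]
  have hvx : (⟪v, x⟫ : ℝ) = ∑ j, v j * x j := by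
    simp only [PiLp.inner_apply, RCLike.inner_apply', conj_trivial]
  rw [hx, hv, hvx, Finset.mul_sum, Finset.mul_sum,
    ← Finset.sum_add_distrib, ← Finset.sum_add_distrib]
  apply Finset.sum_congr rfl
  intro j _
  ring

lemma hasDerivAt_cexp_quad (a w S r : ℝ) :
    HasDerivAt (fun r : ℝ => Complex.exp (Complex.I * ((S + r*w + a*r^2 : ℝ) : ℂ)))
      (Complex.exp (Complex.I * ((S + r*w + a*r^2 : ℝ) : ℂ))
        * (Complex.I * ((w + 2*a*r : ℝ) : ℂ))) r := by
  have h1 : HasDerivAt (fun r : ℝ => S + r*w + a*r^2) (w + 2*a*r) r := by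
    have := (((hasDerivAt_id r).mul_const w).const_add S).add ((hasDerivAt_pow 2 r).const_mul a)
    refine this.congr_deriv ?_
    push_cast
    ring
  exact (h1.ofReal_comp.const_mul Complex.I).cexp

lemma mode_dir1 (t : ℝ) (x : EuclideanSpace ℝ (Fin d)) (j : Fin d) :
    HasDerivAt (fun r : ℝ => modeF m ω hbar b f p t (x + r • EuclideanSpace.single j (1:ℝ)))
      (modeF m ω hbar b f p t x
        * (Complex.I * ((2 * alph m ω hbar t * x j + bet ω hbar b f p t j : ℝ) : ℂ))) 0 := by
  have hfun : (fun r : ℝ => modeF m ω hbar b f p t (x + r • EuclideanSpace.single j (1:ℝ)))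
      = fun r : ℝ => Complex.exp (Complex.I * ((Sf m ω hbar b f p t x
          + r*(2 * alph m ω hbar t * x j + bet ω hbar b f p t j)
          + alph m ω hbar t * r^2 : ℝ) : ℂ)) := by
    funext r
    rw [modeF, Sf_shift]
  rw [hfun]
  have h0 := hasDerivAt_cexp_quad (alph m ω hbar t)
    (2 * alph m ω hbar t * x j + bet ω hbar b f p t j) (Sf m ω hbar b f p t x) 0
  have e0 : Sf m ω hbar b f p t x
      + 0*(2 * alph m ω hbar t * x j + bet ω hbar b f p t j)
      + alph m ω hbar t * 0^2 = Sf m ω hbar b f p t x := by ring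
  have e1 : (2 * alph m ω hbar t * x j + bet ω hbar b f p t j) + 2 * alph m ω hbar t * 0
      = 2 * alph m ω hbar t * x j + bet ω hbar b f p t j := by ring
  rw [e0, e1] at h0
  exact h0.congr_deriv (by rw [modeF])

lemma mode_dir2 (t : ℝ) (x : EuclideanSpace ℝ (Fin d)) (j : Fin d) :
    HasDerivAt (fun r : ℝ =>
        modeF m ω hbar b f p t (x + r • EuclideanSpace.single j (1:ℝ))
          * (Complex.I * ((2 * alph m ω hbar t * ((x + r • EuclideanSpace.single j (1:ℝ)) j)
              + bet ω hbar b f p t j : ℝ) : ℂ)))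
      (modeF m ω hbar b f p t x
        * ((Complex.I * ((2 * alph m ω hbar t * x j + bet ω hbar b f p t j : ℝ) : ℂ))^2
          + Complex.I * ((2 * alph m ω hbar t : ℝ) : ℂ))) 0 := by
  have happ : ∀ r : ℝ, (x + r • EuclideanSpace.single j (1:ℝ)) j = x j + r := by
    intro r; simp [EuclideanSpace.single_apply]
  have hfun : (fun r : ℝ =>
        modeF m ω hbar b f p t (x + r • EuclideanSpace.single j (1:ℝ))
          * (Complex.I * ((2 * alph m ω hbar t * ((x + r • EuclideanSpace.single j (1:ℝ)) j)
              + bet ω hbar b f p t j : ℝ) : ℂ)))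
      = fun r : ℝ => Complex.exp (Complex.I * ((Sf m ω hbar b f p t x
          + r*(2 * alph m ω hbar t * x j + bet ω hbar b f p t j)
          + alph m ω hbar t * r^2 : ℝ) : ℂ))
        * (Complex.I * (((2 * alph m ω hbar t * x j + bet ω hbar b f p t j)
            + 2 * alph m ω hbar t * r : ℝ) : ℂ)) := by
    funext r
    rw [modeF, Sf_shift, happ r]
    norm_num
    ring_nf
  rw [hfun]
  have hlin : HasDerivAt (fun r : ℝ => (Complex.I * (((2 * alph m ω hbar t * x j
      + bet ω hbar b f p t j) + 2 * alph m ω hbar t * r : ℝ) : ℂ)))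
      (Complex.I * ((2 * alph m ω hbar t : ℝ) : ℂ)) 0 := by
    have hr : HasDerivAt (fun r : ℝ => (2 * alph m ω hbar t * x j + bet ω hbar b f p t j)
        + 2 * alph m ω hbar t * r) (2 * alph m ω hbar t) 0 := by
      simpa using ((hasDerivAt_id (0:ℝ)).const_mul (2 * alph m ω hbar t)).const_add
        (2 * alph m ω hbar t * x j + bet ω hbar b f p t j)
    exact hr.ofReal_comp.const_mul Complex.I
  have hexp := hasDerivAt_cexp_quad (alph m ω hbar t)
    (2 * alph m ω hbar t * x j + bet ω hbar b f p t j) (Sf m ω hbar b f p t x) 0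
  have := hexp.mul hlin
  have e0 : Sf m ω hbar b f p t x
      + 0*(2 * alph m ω hbar t * x j + bet ω hbar b f p t j)
      + alph m ω hbar t * 0^2 = Sf m ω hbar b f p t x := by ring
  have e1 : (2 * alph m ω hbar t * x j + bet ω hbar b f p t j) + 2 * alph m ω hbar t * 0
      = 2 * alph m ω hbar t * x j + bet ω hbar b f p t j := by ring
  rw [e0, e1] at this
  refine this.congr_deriv ?_
  rw [modeF]
  ring

lemma lap_eq (t : ℝ) (x : EuclideanSpace ℝ (Fin d)) (A : ℂ) (n : ℕ) (co : ℕ → ℂ) (bv : ℕ → ℝ) :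
    laplacian (fun y => A * ∑ k ∈ Finset.range (n+1), co k * modeF m ω hbar (bv k) f p t y) x
      = A * ∑ k ∈ Finset.range (n+1), co k * (modeF m ω hbar (bv k) f p t x
          * (2 * ((alph m ω hbar t : ℝ) : ℂ) * (d : ℂ) * Complex.I
            - ((4*(alph m ω hbar t)^2*‖x‖^2
                + 4*alph m ω hbar t*(⟪bet ω hbar (bv k) f p t, x⟫ : ℝ)
                + ‖bet ω hbar (bv k) f p t‖^2 : ℝ) : ℂ))) := by
  have hd1 : ∀ (j : Fin d) (y : EuclideanSpace ℝ (Fin d)),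
      dirDeriv (EuclideanSpace.single j (1:ℝ))
        (fun y => A * ∑ k ∈ Finset.range (n+1), co k * modeF m ω hbar (bv k) f p t y) y
      = A * ∑ k ∈ Finset.range (n+1), co k * (modeF m ω hbar (bv k) f p t y
          * (Complex.I * ((2 * alph m ω hbar t * y j + bet ω hbar (bv k) f p t j : ℝ) : ℂ))) := by
    intro j y
    apply HasDerivAt.deriv
    exact (HasDerivAt.fun_sum
      (fun k _ => (mode_dir1 (b := bv k) t y j).const_mul (co k))).const_mul A
  have step : ∀ j : Fin d,
      dirDeriv (EuclideanSpace.single j (1:ℝ)) (dirDeriv (EuclideanSpace.single j (1:ℝ))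
        (fun y => A * ∑ k ∈ Finset.range (n+1), co k * modeF m ω hbar (bv k) f p t y)) x
      = A * ∑ k ∈ Finset.range (n+1), co k * (modeF m ω hbar (bv k) f p t x
          * ((Complex.I * ((2 * alph m ω hbar t * x j
                + bet ω hbar (bv k) f p t j : ℝ) : ℂ))^2
            + Complex.I * ((2 * alph m ω hbar t : ℝ) : ℂ))) := by
    intro j
    have hfn : dirDeriv (EuclideanSpace.single j (1:ℝ))
        (fun y => A * ∑ k ∈ Finset.range (n+1), co k * modeF m ω hbar (bv k) f p t y)
        = fun y => A * ∑ k ∈ Finset.range (n+1), co k * (modeF m ω hbar (bv k) f p t y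
            * (Complex.I * ((2 * alph m ω hbar t * y j
                + bet ω hbar (bv k) f p t j : ℝ) : ℂ))) := funext (hd1 j)
    rw [hfn]
    apply HasDerivAt.deriv
    exact (HasDerivAt.fun_sum
      (fun k _ => (mode_dir2 (b := bv k) t x j).const_mul (co k))).const_mul A
  unfold laplacian
  rw [Finset.sum_congr rfl (fun j _ => step j), ← Finset.mul_sum]
  congr 1
  rw [Finset.sum_comm]
  apply Finset.sum_congr rfl
  intro k _
  rw [← Finset.mul_sum, ← Finset.mul_sum]
  congr 1
  have hsq : ∀ j : Fin d,
      (Complex.I * ((2 * alph m ω hbar t * x j + bet ω hbar (bv k) f p t j : ℝ) : ℂ))^2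
        + Complex.I * ((2 * alph m ω hbar t : ℝ) : ℂ)
      = Complex.I * ((2 * alph m ω hbar t : ℝ) : ℂ)
        - (((2 * alph m ω hbar t * x j + bet ω hbar (bv k) f p t j)^2 : ℝ) : ℂ) := by
    intro j
    have : (Complex.I * ((2 * alph m ω hbar t * x j + bet ω hbar (bv k) f p t j : ℝ) : ℂ))^2
        = -(((2 * alph m ω hbar t * x j + bet ω hbar (bv k) f p t j)^2 : ℝ) : ℂ) := by
      rw [mul_pow, Complex.I_sq]
      push_cast
      ring
    rw [this]
    ring
  simp only [hsq]
  rw [Finset.sum_sub_distrib, Finset.sum_const, Finset.card_univ, Fintype.card_fin,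
    ← Complex.ofReal_sum]
  have := sum_sq (alph m ω hbar t) (bet ω hbar (bv k) f p t) x
  have hss : (∑ j : Fin d, (2 * alph m ω hbar t * x j + bet ω hbar (bv k) f p t j)^2)
      = 4*(alph m ω hbar t)^2*‖x‖^2 + 4*alph m ω hbar t*(⟪bet ω hbar (bv k) f p t, x⟫ : ℝ)
        + ‖bet ω hbar (bv k) f p t‖^2 := this
  rw [hss]
  rw [nsmul_eq_mul]
  push_cast
  ring

lemma hSt (hm0 : m ≠ 0) (hω0 : ω ≠ 0) (hh : hbar ≠ 0) (hf : Continuous f) {t : ℝ}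
    (hc : Real.cos (ω*t) ≠ 0) (x : EuclideanSpace ℝ (Fin d)) :
    HasDerivAt (fun t => Sf m ω hbar b f p t x)
      (-(m*ω)/(2*hbar) * (ω / Real.cos (ω*t)^2) * ‖x‖^2
        + ((⟪f t, x⟫ : ℝ)/hbar
            + (ω * Real.sin (ω*t)/Real.cos (ω*t)) * ⟪bet ω hbar b f p t, x⟫)
        + -(hbar/(2*m)) * ‖bet ω hbar b f p t‖^2) t :=
  (((halph hc).mul_const (‖x‖^2)).add (hbetx hf hc hh x)).add (hgam hm0 hω0 hh hf hc)

lemma hmode_t (hm0 : m ≠ 0) (hω0 : ω ≠ 0) (hh : hbar ≠ 0) (hf : Continuous f) {t : ℝ}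
    (hc : Real.cos (ω*t) ≠ 0) (x : EuclideanSpace ℝ (Fin d)) :
    HasDerivAt (fun t => modeF m ω hbar b f p t x)
      (modeF m ω hbar b f p t x * (Complex.I *
        ((-(m*ω)/(2*hbar) * (ω / Real.cos (ω*t)^2) * ‖x‖^2
          + ((⟪f t, x⟫ : ℝ)/hbar
              + (ω * Real.sin (ω*t)/Real.cos (ω*t)) * ⟪bet ω hbar b f p t, x⟫)
          + -(hbar/(2*m)) * ‖bet ω hbar b f p t‖^2 : ℝ) : ℂ))) t := by
  have h := (((hSt (b := b) (p := p) hm0 hω0 hh hf hc x).ofReal_comp.const_mul Complex.I).cexp)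
  exact h

lemma hAt {t : ℝ} (hc : Real.cos (ω*t) ≠ 0) :
    HasDerivAt (fun t : ℝ => Real.cos (ω*t) ^ (-(d:ℝ)/2))
      ((-(d:ℝ)/2) * Real.cos (ω*t) ^ (-(d:ℝ)/2 - 1) * -(ω * Real.sin (ω*t))) t := by
  have := (Real.hasDerivAt_rpow_const (p := -(d:ℝ)/2) (Or.inl hc)).comp t hωcos
  exact this.congr_deriv (by ring)

lemma hFt (hm0 : m ≠ 0) (hω0 : ω ≠ 0) (hh : hbar ≠ 0) (hf : Continuous f) {t : ℝ}
    (hc : Real.cos (ω*t) ≠ 0) (x : EuclideanSpace ℝ (Fin d)) (n : ℕ) (co : ℕ → ℂ)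
    (bv : ℕ → ℝ) :
    HasDerivAt (fun t => ((Real.cos (ω*t) ^ (-(d:ℝ)/2) : ℝ) : ℂ)
        * ∑ k ∈ Finset.range (n+1), co k * modeF m ω hbar (bv k) f p t x)
      ((((-(d:ℝ)/2) * Real.cos (ω*t) ^ (-(d:ℝ)/2 - 1) * -(ω * Real.sin (ω*t)) : ℝ) : ℂ)
          * ∑ k ∈ Finset.range (n+1), co k * modeF m ω hbar (bv k) f p t x
        + ((Real.cos (ω*t) ^ (-(d:ℝ)/2) : ℝ) : ℂ)
          * ∑ k ∈ Finset.range (n+1), co k * (modeF m ω hbar (bv k) f p t x * (Complex.I *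
            ((-(m*ω)/(2*hbar) * (ω / Real.cos (ω*t)^2) * ‖x‖^2
              + ((⟪f t, x⟫ : ℝ)/hbar
                  + (ω * Real.sin (ω*t)/Real.cos (ω*t)) * ⟪bet ω hbar (bv k) f p t, x⟫)
              + -(hbar/(2*m)) * ‖bet ω hbar (bv k) f p t‖^2 : ℝ) : ℂ)))) t := by
  exact ((hAt hc).ofReal_comp).mul
    (HasDerivAt.fun_sum (fun k _ => (hmode_t (b := bv k) (p := p) hm0 hω0 hh hf hc x).const_mul (co k)))

lemma Sf_zero (x : EuclideanSpace ℝ (Fin d)) :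
    Sf m ω hbar b f p 0 x = b * (⟪p, x⟫ : ℝ) / hbar := by
  simp only [Sf, alph, bet, gam, Pv, Qv, Kc, mul_zero, Real.tan_zero, Real.cos_zero,
    intervalIntegral.integral_same, inner_add_left, real_inner_smul_left, inner_zero_left,
    inner_zero_right, mul_one, norm_zero]
  ring

end DOS

set_option maxHeartbeats 1000000 in
open DOS in
/-- Fix `ħ > 0`, `m > 0`, `ω > 0`, `d ≥ 1`, `p ∈ ℝ^d`, a continuous
`f : ℝ → ℝ^d`, a real `a` and an integer `n ≥ 1`.  The function
`ψ_n(t,x) = (cos ωt)^{−d/2}·exp{(imω/(2ħ sin ωt cos ωt))·[−‖x‖² sin²ωt + 2x·I(t,0)cos ωt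
− 2J(t,0)cos ωt + 2x·I(0,t) − ‖I(0,t)‖²]}·∑_{k=0}^{n} C_k(n,a)·
exp[i(1−2k/n)p·(x−I(0,t))/(ħ cos ωt) − i(1−2k/n)²‖p‖² tan ωt/(2ħmω)]` satisfies the driven
harmonic oscillator Schrödinger equation on `(0, π/(2ω)) × ℝ^d`, and as `t → 0⁺` it tends to
the superoscillating initial datum `∑_{k=0}^n C_k(n,a)·exp(i(p·x)(1−2k/n)/ħ)`. -/
theorem driven_oscillator_superoscillating_solution
    (hbar m ω : ℝ) (hhbar : 0 < hbar) (hm : 0 < m) (hω : 0 < ω)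
    (d : ℕ) (hd : 1 ≤ d) (p : EuclideanSpace ℝ (Fin d))
    (f : ℝ → EuclideanSpace ℝ (Fin d)) (hf : Continuous f) (a : ℝ)
    (n : ℕ) (hn : 1 ≤ n)
    (ψ : ℝ → EuclideanSpace ℝ (Fin d) → ℂ)
    (hψ : ∀ (t : ℝ) (x : EuclideanSpace ℝ (Fin d)),
      ψ t x = ((Real.cos (ω * t) ^ (-(d : ℝ) / 2) : ℝ) : ℂ)
        * Complex.exp (Complex.I *
            (((m * ω / (2 * hbar * Real.sin (ω * t) * Real.cos (ω * t))) *
              (-‖x‖ ^ 2 * Real.sin (ω * t) ^ 2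
                + 2 * (⟪x, Ivec m ω f t 0⟫ : ℝ) * Real.cos (ω * t)
                - 2 * Jval m ω f t 0 * Real.cos (ω * t)
                + 2 * (⟪x, Ivec m ω f 0 t⟫ : ℝ)
                - ‖Ivec m ω f 0 t‖ ^ 2) : ℝ) : ℂ))
        * ∑ k ∈ Finset.range (n + 1),
            ((n.choose k : ℂ) * (((1 + a) / 2 : ℝ) : ℂ) ^ (n - k)
                * (((1 - a) / 2 : ℝ) : ℂ) ^ k)
              * Complex.exp (Complex.I *
                  ((((1 - 2 * (k : ℝ) / (n : ℝ)) * (⟪p, x - Ivec m ω f 0 t⟫ : ℝ)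
                        / (hbar * Real.cos (ω * t))
                      - (1 - 2 * (k : ℝ) / (n : ℝ)) ^ 2 * ‖p‖ ^ 2 * Real.tan (ω * t)
                        / (2 * hbar * m * ω)) : ℝ) : ℂ))) :
    (∀ t ∈ Set.Ioo (0 : ℝ) (Real.pi / (2 * ω)), ∀ x : EuclideanSpace ℝ (Fin d),
      Complex.I * (hbar : ℂ) * deriv (fun s : ℝ => ψ s x) t
        + ((hbar : ℂ) ^ 2 / (2 * (m : ℂ))) * laplacian (ψ t) x
        - (1 / 2) * (m : ℂ) * (ω : ℂ) ^ 2 * ((‖x‖ ^ 2 : ℝ) : ℂ) * ψ t x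
        + ((⟪f t, x⟫ : ℝ) : ℂ) * ψ t x = 0)
    ∧ ∀ x : EuclideanSpace ℝ (Fin d),
        Filter.Tendsto (fun t : ℝ => ψ t x) (nhdsWithin 0 (Set.Ioi 0))
          (nhds (∑ k ∈ Finset.range (n + 1),
            ((n.choose k : ℂ) * (((1 + a) / 2 : ℝ) : ℂ) ^ (n - k)
                * (((1 - a) / 2 : ℝ) : ℂ) ^ k)
              * Complex.exp (Complex.I * (((⟪p, x⟫ : ℝ)
                  * (1 - 2 * (k : ℝ) / (n : ℝ)) / hbar : ℝ) : ℂ)))) := by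
  have hm0 : m ≠ 0 := hm.ne'
  have hω0 : ω ≠ 0 := hω.ne'
  have hh0 : hbar ≠ 0 := hhbar.ne'
  have psi_eq : ∀ {t : ℝ}, Real.sin (ω*t) ≠ 0 → Real.cos (ω*t) ≠ 0 →
      ∀ x : EuclideanSpace ℝ (Fin d),
      ψ t x = ((Real.cos (ω*t) ^ (-(d:ℝ)/2) : ℝ) : ℂ)
        * ∑ k ∈ Finset.range (n+1),
            ((n.choose k : ℂ) * (((1 + a) / 2 : ℝ) : ℂ) ^ (n - k)
                * (((1 - a) / 2 : ℝ) : ℂ) ^ k)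
              * modeF m ω hbar (1 - 2 * (k : ℝ) / (n : ℝ)) f p t x := by
    intro t hs hc x
    rw [hψ t x, mul_assoc]
    congr 1
    rw [Finset.mul_sum]
    apply Finset.sum_congr rfl
    intro k hk
    rw [modeF, ← phase_eq hm0 hω0 hh0 hs hc hf (1 - 2 * (k : ℝ) / (n : ℝ)) x,
      Complex.ofReal_add, mul_add, Complex.exp_add]
    ring
  constructor
  · intro t ht x
    obtain ⟨ht0, htl⟩ := ht
    have hπ : 0 < Real.pi := Real.pi_pos
    have hωt0 : 0 < ω*t := by positivity
    have hωtl : ω*t < Real.pi/2 := by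
      have h1 : ω*t < ω*(Real.pi/(2*ω)) := (mul_lt_mul_iff_right₀ hω).mpr htl
      have h2 : ω*(Real.pi/(2*ω)) = Real.pi/2 := by field_simp
      linarith
    have hspos : 0 < Real.sin (ω*t) :=
      Real.sin_pos_of_pos_of_lt_pi hωt0 (by linarith)
    have hcpos : 0 < Real.cos (ω*t) :=
      Real.cos_pos_of_mem_Ioo ⟨by linarith, hωtl⟩
    have hs : Real.sin (ω*t) ≠ 0 := hspos.ne'
    have hc : Real.cos (ω*t) ≠ 0 := hcpos.ne'
    have hU : IsOpen {u : ℝ | Real.sin (ω*u) ≠ 0 ∧ Real.cos (ω*u) ≠ 0} := by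
      apply IsOpen.inter
      · exact isOpen_compl_singleton.preimage
          (Real.continuous_sin.comp (continuous_const.mul continuous_id))
      · exact isOpen_compl_singleton.preimage
          (Real.continuous_cos.comp (continuous_const.mul continuous_id))
    have hev : (fun u => ψ u x) =ᶠ[nhds t]
        (fun u => ((Real.cos (ω*u) ^ (-(d:ℝ)/2) : ℝ) : ℂ)
          * ∑ k ∈ Finset.range (n+1),
              ((n.choose k : ℂ) * (((1 + a) / 2 : ℝ) : ℂ) ^ (n - k)
                  * (((1 - a) / 2 : ℝ) : ℂ) ^ k)
                * modeF m ω hbar (1 - 2 * (k : ℝ) / (n : ℝ)) f p u x) :=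
      Filter.eventually_of_mem (hU.mem_nhds ⟨hs, hc⟩) (fun u hu => psi_eq hu.1 hu.2 x)
    have hder := hFt (p := p) hm0 hω0 hh0 hf hc x n
      (fun k => ((n.choose k : ℂ) * (((1 + a) / 2 : ℝ) : ℂ) ^ (n - k)
                  * (((1 - a) / 2 : ℝ) : ℂ) ^ k))
      (fun k => 1 - 2 * (k : ℝ) / (n : ℝ))
    rw [Filter.EventuallyEq.deriv_eq hev, hder.deriv]
    have hfuneq : ψ t = (fun y => ((Real.cos (ω*t) ^ (-(d:ℝ)/2) : ℝ) : ℂ)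
        * ∑ k ∈ Finset.range (n+1),
            ((n.choose k : ℂ) * (((1 + a) / 2 : ℝ) : ℂ) ^ (n - k)
                * (((1 - a) / 2 : ℝ) : ℂ) ^ k)
              * modeF m ω hbar (1 - 2 * (k : ℝ) / (n : ℝ)) f p t y) :=
      funext (fun y => psi_eq hs hc y)
    rw [psi_eq hs hc x, hfuneq]
    have hlap := lap_eq (m := m) (ω := ω) (hbar := hbar) (f := f) (p := p) t x
      ((Real.cos (ω*t) ^ (-(d:ℝ)/2) : ℝ) : ℂ) n
      (fun k => ((n.choose k : ℂ) * (((1 + a) / 2 : ℝ) : ℂ) ^ (n - k)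
          * (((1 - a) / 2 : ℝ) : ℂ) ^ k))
      (fun k => 1 - 2 * (k : ℝ) / (n : ℝ))
    rw [hlap]
    simp only [Finset.mul_sum, mul_add]
    rw [← Finset.sum_add_distrib, ← Finset.sum_add_distrib, ← Finset.sum_sub_distrib, ← Finset.sum_add_distrib]
    apply Finset.sum_eq_zero
    intro k hk
    have hc2 : Real.cos (ω*t) ^ (-(d:ℝ)/2 - 1) = Real.cos (ω*t) ^ (-(d:ℝ)/2) / Real.cos (ω*t) := by
      rw [Real.rpow_sub hcpos, Real.rpow_one]
    rw [hc2, DOS.alph, Real.tan_eq_sin_div_cos]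
    have hpy : Real.sin (ω*t)^2 + Real.cos (ω*t)^2 = 1 := Real.sin_sq_add_cos_sq (ω*t)
    set W := ‖DOS.bet ω hbar (1 - 2 * (k:ℝ) / (n:ℝ)) f p t‖^2 with hW_def
    set B := (inner ℝ (DOS.bet ω hbar (1 - 2 * (k:ℝ) / (n:ℝ)) f p t) x : ℝ) with hB_def
    set M := DOS.modeF m ω hbar (1 - 2 * (k:ℝ) / (n:ℝ)) f p t x with hM_def
    set G := (inner ℝ (f t) x : ℝ) with hG_def
    set X := ‖x‖^2 with hX_def
    set co := ((n.choose k : ℂ) * (((1 + a) / 2 : ℝ) : ℂ) ^ (n - k)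
        * (((1 - a) / 2 : ℝ) : ℂ) ^ k) with hco_def
    set s := Real.sin (ω*t) with hs_def
    set c := Real.cos (ω*t) with hc_def
    set A := c ^ (-(d:ℝ)/2) with hA_def
    set Ad := -(d:ℝ)/2 * (A/c) * -(ω*s) with hAd_def
    set Sd := -(m*ω)/(2*hbar) * (ω/c^2) * X + (G/hbar + ω*s/c*B) + -(hbar/(2*m))*W with hSd_def
    set av := -(m*ω)/(2*hbar) * (s/c) with hav_def
    clear_value W B M G X co s c A
    have hsc : ((s : ℝ) : ℂ)^2 + ((c : ℝ) : ℂ)^2 = 1 := by exact_mod_cast hpy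
    have hcC : ((c : ℝ) : ℂ) ≠ 0 := Complex.ofReal_ne_zero.mpr hc
    have hhC : ((hbar : ℝ) : ℂ) ≠ 0 := Complex.ofReal_ne_zero.mpr hh0
    have hmC : ((m : ℝ) : ℂ) ≠ 0 := Complex.ofReal_ne_zero.mpr hm0
    have r1 : Ad * (2*hbar*c) = hbar*(d:ℝ)*ω*s*A := by
      rw [hAd_def]; field_simp
    have r2 : av * (2*hbar*c) = -(m*ω*s) := by
      rw [hav_def]; field_simp
    have r2q : av^2 * (4*hbar^2*c^2) = m^2*ω^2*s^2 := by
      rw [hav_def]; field_simp; ring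
    have r3 : Sd * (2*hbar*m*c^2)
        = -(m^2*ω^2*X) + 2*m*c^2*G + 2*hbar*m*ω*s*c*B - hbar^2*c^2*W := by
      rw [hSd_def]; field_simp; ring
    have hR1 : ((Ad : ℝ) : ℂ) * (2*(hbar:ℂ)*(c:ℂ))
        = (hbar:ℂ)*(d:ℂ)*(ω:ℂ)*(s:ℂ)*(A:ℂ) := by exact_mod_cast r1
    have hR2 : ((av : ℝ) : ℂ) * (2*(hbar:ℂ)*(c:ℂ)) = -((m:ℂ)*(ω:ℂ)*(s:ℂ)) := by
      exact_mod_cast r2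
    have hR2q : ((av : ℝ) : ℂ)^2 * (4*(hbar:ℂ)^2*(c:ℂ)^2)
        = (m:ℂ)^2*(ω:ℂ)^2*(s:ℂ)^2 := by exact_mod_cast r2q
    have hR3 : ((Sd : ℝ) : ℂ) * (2*(hbar:ℂ)*(m:ℂ)*(c:ℂ)^2)
        = -((m:ℂ)^2*(ω:ℂ)^2*(X:ℂ)) + 2*(m:ℂ)*(c:ℂ)^2*(G:ℂ)
          + 2*(hbar:ℂ)*(m:ℂ)*(ω:ℂ)*(s:ℂ)*(c:ℂ)*(B:ℂ) - (hbar:ℂ)^2*(c:ℂ)^2*(W:ℂ) := by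
      exact_mod_cast r3
    have hR5 : ((hbar:ℂ)^2/(2*(m:ℂ))) * (2*(m:ℂ)) = (hbar:ℂ)^2 := by
      field_simp
    have hI : Complex.I^2 = -1 := Complex.I_sq
    push_cast
    refine mul_left_cancel₀
      (show ((c:ℂ)^3*(hbar:ℂ)^2*(m:ℂ)) ≠ 0 from
        mul_ne_zero (mul_ne_zero (pow_ne_zero _ hcC) (pow_ne_zero _ hhC)) hmC) ?_
    rw [mul_zero]
    linear_combination
      (co*M*(Complex.I*(hbar:ℂ)^2*(m:ℂ)*(c:ℂ)^2/2)) * hR1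
      + (co*M*((c:ℂ)^3*(hbar:ℂ)^3*(m:ℂ)*(A:ℂ)*(Sd:ℂ))) * hI
      + (-(co*M*((hbar:ℂ)^2*(A:ℂ)*(c:ℂ)/2))) * hR3
      + (co*M*((c:ℂ)^3*(hbar:ℂ)^2*(A:ℂ)/2)
          *(2*((av:ℝ):ℂ)*(d:ℂ)*Complex.I - 4*((av:ℝ):ℂ)^2*(X:ℂ)
            - 4*((av:ℝ):ℂ)*(B:ℂ) - (W:ℂ))) * hR5
      + (co*M*((hbar:ℂ)^3*(c:ℂ)^2*(A:ℂ))*((d:ℂ)*Complex.I/2 - (B:ℂ))) * hR2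
      + (-(co*M*((c:ℂ)*(hbar:ℂ)^2*(X:ℂ)*(A:ℂ)/2))) * hR2q
      + (-(co*M*((hbar:ℂ)^2*(A:ℂ)*(m:ℂ)^2*(ω:ℂ)^2*(X:ℂ)*(c:ℂ)/2))) * hsc
  · intro x
    have hc0 : Real.cos (ω*(0:ℝ)) ≠ 0 := by norm_num
    have hder0 := hFt (p := p) hm0 hω0 hh0 hf hc0 x n
      (fun k => ((n.choose k : ℂ) * (((1 + a) / 2 : ℝ) : ℂ) ^ (n - k)
          * (((1 - a) / 2 : ℝ) : ℂ) ^ k))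
      (fun k => 1 - 2 * (k : ℝ) / (n : ℝ))
    have hlim := (hder0.continuousAt.tendsto).mono_left (nhdsWithin_le_nhds (s := Set.Ioi (0:ℝ)))
    have hπω : 0 < Real.pi/(2*ω) := by positivity
    have hmem : Set.Ioo (0:ℝ) (Real.pi/(2*ω)) ∈ nhdsWithin (0:ℝ) (Set.Ioi 0) :=
      Ioo_mem_nhdsGT_of_mem ⟨le_refl 0, hπω⟩
    have hev2 : (fun t => ψ t x) =ᶠ[nhdsWithin (0:ℝ) (Set.Ioi 0)]
        (fun u => ((Real.cos (ω*u) ^ (-(d:ℝ)/2) : ℝ) : ℂ)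
          * ∑ k ∈ Finset.range (n+1),
              ((n.choose k : ℂ) * (((1 + a) / 2 : ℝ) : ℂ) ^ (n - k)
                  * (((1 - a) / 2 : ℝ) : ℂ) ^ k)
                * modeF m ω hbar (1 - 2 * (k : ℝ) / (n : ℝ)) f p u x) := by
      filter_upwards [hmem] with u hu
      obtain ⟨hu0, hul⟩ := hu
      have hπ : 0 < Real.pi := Real.pi_pos
      have hωu0 : 0 < ω*u := by positivity
      have hωul : ω*u < Real.pi/2 := by
        have h1 : ω*u < ω*(Real.pi/(2*ω)) := (mul_lt_mul_iff_right₀ hω).mpr hul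
        have h2 : ω*(Real.pi/(2*ω)) = Real.pi/2 := by field_simp
        linarith
      have hspos : 0 < Real.sin (ω*u) :=
        Real.sin_pos_of_pos_of_lt_pi hωu0 (by linarith)
      have hcpos : 0 < Real.cos (ω*u) :=
        Real.cos_pos_of_mem_Ioo ⟨by linarith, hωul⟩
      exact psi_eq hspos.ne' hcpos.ne' x
    rw [Filter.tendsto_congr' hev2]
    convert hlim using 2
    simp only [mul_zero, Real.cos_zero, Real.one_rpow, Complex.ofReal_one, one_mul,
      modeF, Sf_zero]
    apply Finset.sum_congr rfl
    intro k _
    have harg : ((⟪p, x⟫ : ℝ) * (1 - 2*(k:ℝ)/(n:ℝ)) / hbar)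
        = (1 - 2*(k:ℝ)/(n:ℝ)) * (⟪p, x⟫ : ℝ) / hbar := by ring
    rw [harg]
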